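/- Let Q(x) = ½xᵀAx with A symmetric positive definite, let e ∈ ℝ^n be nonzero, and suppose u_λ : B₂ → ℝ (λ ≥ 1) converge to Q in C¹(B₂) as λ → ∞. Set ê = e/λ. Then ∫_{B₁} Δ²_ê u_λ(x) dx → (eᵀAe/‖e‖²)·|B₁| as λ → ∞. -/

import Mathlib

open scoped BigOperators
open MeasureTheory Metric

private lemma pow_bound (n : ℕ) (t : ℝ) (h0 : 0 ≤ t) (h1 : t ≤ 1) :
    (1+t)^n - (1-t)^n ≤ n * 2^n * t := by
  have key := geom_sum₂_mul (1+t) (1-t) n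
  have h2 : (1+t) - (1-t) = 2*t := by ring
  rw [h2] at key
  rw [← key]
  have hb : (∑ i ∈ Finset.range n, (1+t)^i * (1-t)^(n-1-i)) ≤ n * 2^(n-1) := by
    calc (∑ i ∈ Finset.range n, (1+t)^i * (1-t)^(n-1-i))
        ≤ ∑ _i ∈ Finset.range n, (2:ℝ)^(n-1) := by
          apply Finset.sum_le_sum; intro i hi
          have hin := Finset.mem_range.mp hi
          have h1t : (1+t)^i ≤ 2^i := pow_le_pow_left₀ (by linarith) (by linarith) i
          have h2t : (1-t)^(n-1-i) ≤ 1 := pow_le_one₀ (by linarith) (by linarith)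
          calc (1+t)^i * (1-t)^(n-1-i) ≤ 2^i * 1 :=
                mul_le_mul h1t h2t (pow_nonneg (by linarith) _) (by positivity)
            _ = 2^i := by ring
            _ ≤ 2^(n-1) := pow_le_pow_right₀ (by norm_num) (by omega)
      _ = n * 2^(n-1) := by simp [mul_comm]
  calc (∑ i ∈ Finset.range n, (1+t)^i * (1-t)^(n-1-i)) * (2*t)
      ≤ (n * 2^(n-1)) * (2*t) := by
        apply mul_le_mul_of_nonneg_right hb (by positivity)
    _ = n * (2^(n-1) * 2) * t := by ring
    _ ≤ n * 2^n * t := by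
        rcases Nat.eq_zero_or_pos n with h|h
        · simp [h]
        · rw [← pow_succ, show n - 1 + 1 = n from by omega]

private lemma ann_bound (n : ℕ) (t : ℝ) (h0 : 0 < t) (h1 : t ≤ 1/4) :
    (volume (ball (0:EuclideanSpace ℝ (Fin n)) (1+t) \ ball (0:EuclideanSpace ℝ (Fin n)) (1-t))).toReal
      ≤ (n * 2^n * t) * (volume (ball (0:EuclideanSpace ℝ (Fin n)) 1)).toReal := by
  rcases Nat.eq_zero_or_pos n with hn | hn
  · subst hn
    haveI : Subsingleton (EuclideanSpace ℝ (Fin 0)) := by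
      refine ⟨fun a b => ?_⟩; ext i; exact absurd i.2 (by omega)
    have : ball (0:EuclideanSpace ℝ (Fin 0)) (1+t) ⊆ ball (0:EuclideanSpace ℝ (Fin 0)) (1-t) := by
      intro x _; have : x = 0 := Subsingleton.elim _ _
      simp [this, mem_ball, h0]; linarith
    rw [Set.diff_eq_empty.mpr this]
    simp
  · haveI : Nontrivial (EuclideanSpace ℝ (Fin n)) := by
      refine ⟨EuclideanSpace.single ⟨0, hn⟩ 1, 0, ?_⟩
      intro hcon
      have := congrArg (fun v => v ⟨0, hn⟩) hcon
      simp [EuclideanSpace.single_apply] at this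
    have hsub : ball (0:EuclideanSpace ℝ (Fin n)) (1-t) ⊆ ball (0:EuclideanSpace ℝ (Fin n)) (1+t) :=
      ball_subset_ball (by linarith)
    rw [measure_diff hsub measurableSet_ball.nullMeasurableSet measure_ball_lt_top.ne]
    rw [Measure.addHaar_ball _ _ (by linarith : (0:ℝ) ≤ 1+t),
        Measure.addHaar_ball _ _ (by linarith : (0:ℝ) ≤ 1-t)]
    have hle : ENNReal.ofReal ((1-t) ^ Module.finrank ℝ (EuclideanSpace ℝ (Fin n))) * volume (ball (0:EuclideanSpace ℝ (Fin n)) 1)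
        ≤ ENNReal.ofReal ((1+t) ^ Module.finrank ℝ (EuclideanSpace ℝ (Fin n))) * volume (ball (0:EuclideanSpace ℝ (Fin n)) 1) :=
      mul_le_mul_left (ENNReal.ofReal_le_ofReal
        (pow_le_pow_left₀ (by linarith) (by linarith) _)) _
    have hfin : ENNReal.ofReal ((1+t) ^ Module.finrank ℝ (EuclideanSpace ℝ (Fin n))) * volume (ball (0:EuclideanSpace ℝ (Fin n)) 1) ≠ ⊤ :=
      ENNReal.mul_ne_top ENNReal.ofReal_ne_top measure_ball_lt_top.ne
    rw [ENNReal.toReal_sub_of_le hle hfin, ENNReal.toReal_mul, ENNReal.toReal_mul,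
        ENNReal.toReal_ofReal (by positivity),
        ENNReal.toReal_ofReal (pow_nonneg (by linarith) _), finrank_euclideanSpace_fin]
    rw [← sub_mul]
    exact mul_le_mul_of_nonneg_right (pow_bound n t h0.le (by linarith)) ENNReal.toReal_nonneg

private lemma shift_int {n : ℕ} (f : EuclideanSpace ℝ (Fin n) → ℝ)
    (a h : EuclideanSpace ℝ (Fin n)) (r : ℝ) :
    ∫ x in ball a r, f (x + h) = ∫ y in ball (a + h) r, f y := by
  rw [← integral_indicator measurableSet_ball, ← integral_indicator measurableSet_ball]
  rw [← MeasureTheory.integral_add_right_eq_self (fun y => Set.indicator (ball (a+h) r) f y) h]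
  congr 1; ext x
  by_cases hx : x ∈ ball a r
  · have : x + h ∈ ball (a + h) r := by
      simpa [mem_ball, dist_eq_norm, add_sub_add_right_eq_sub] using hx
    simp [Set.indicator_of_mem hx, Set.indicator_of_mem this]
  · have : x + h ∉ ball (a + h) r := by
      simpa [mem_ball, dist_eq_norm, add_sub_add_right_eq_sub] using hx
    simp [Set.indicator_of_notMem hx, Set.indicator_of_notMem this]

set_option maxHeartbeats 1000000 in
theorem stmt_14 {n : ℕ} (A : Matrix (Fin n) (Fin n) ℝ) (hA : A.PosDef)
    (Q : EuclideanSpace ℝ (Fin n) → ℝ)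
    (hQ : ∀ x, Q x = (1/2) * ∑ i, ∑ j, A i j * x i * x j)
    (e : EuclideanSpace ℝ (Fin n)) (he : e ≠ 0)
    (u : ℝ → EuclideanSpace ℝ (Fin n) → ℝ)
    (hdiff : ∀ lam : ℝ, 1 ≤ lam → ∀ x ∈ Metric.ball (0 : EuclideanSpace ℝ (Fin n)) 2,
      DifferentiableAt ℝ (u lam) x)
    (hC0 : TendstoUniformlyOn (fun lam => u lam) Q Filter.atTop
      (Metric.ball (0 : EuclideanSpace ℝ (Fin n)) 2))
    (hC1 : TendstoUniformlyOn (fun lam x => fderiv ℝ (u lam) x) (fun x => fderiv ℝ Q x)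
      Filter.atTop (Metric.ball (0 : EuclideanSpace ℝ (Fin n)) 2)) :
    Filter.Tendsto
      (fun lam : ℝ => ∫ x in Metric.ball (0 : EuclideanSpace ℝ (Fin n)) 1,
        (u lam (x + lam⁻¹ • e) + u lam (x - lam⁻¹ • e) - 2 * u lam x) / ‖lam⁻¹ • e‖^2)
      Filter.atTop
      (nhds (((∑ i, ∑ j, A i j * e i * e j) / ‖e‖^2)
        * (volume (Metric.ball (0 : EuclideanSpace ℝ (Fin n)) 1)).toReal)) := by
  classical
  have hepos : (0:ℝ) < ‖e‖ := norm_pos_iff.mpr he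
  set c : ℝ := (∑ i, ∑ j, A i j * e i * e j) / ‖e‖^2 with hc
  set μB : ℝ := (volume (Metric.ball (0 : EuclideanSpace ℝ (Fin n)) 1)).toReal with hμB
  have hμBnn : 0 ≤ μB := ENNReal.toReal_nonneg
  -- differentiability of Q
  have hQdiff : Differentiable ℝ Q := by
    have hQ' : Q = fun x => (1/2) * ∑ i, ∑ j, A i j * x i * x j := funext hQ
    rw [hQ']
    apply Differentiable.const_mul
    apply Differentiable.fun_sum; intro i _
    apply Differentiable.fun_sum; intro j _
    exact ((EuclideanSpace.proj i (𝕜 := ℝ)).differentiable.const_mul _).mul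
      (EuclideanSpace.proj j (𝕜 := ℝ)).differentiable
  -- quadratic second difference identity
  have hQsec : ∀ x h : EuclideanSpace ℝ (Fin n),
      Q (x + h) + Q (x - h) - 2 * Q x = ∑ i, ∑ j, A i j * h i * h j := by
    intro x h
    simp only [hQ, Finset.mul_sum, ← Finset.sum_add_distrib, ← Finset.sum_sub_distrib]
    refine Finset.sum_congr rfl fun i _ => Finset.sum_congr rfl fun j _ => ?_
    simp only [PiLp.add_apply, PiLp.sub_apply]
    ring
  rw [Metric.tendsto_nhds]
  intro ε hε
  -- the constant
  set K : ℝ := 2 * (n * 2^n * μB) with hK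
  have hKnn : 0 ≤ K := by positivity
  set ε' : ℝ := ε / (K + 1) with hε'
  have hε'pos : 0 < ε' := by positivity
  have hgradEv := Metric.tendstoUniformlyOn_iff.mp hC1 ε' hε'pos
  filter_upwards [hgradEv, Filter.eventually_ge_atTop (1:ℝ),
    Filter.eventually_ge_atTop (4*‖e‖)] with lam hgrad h1lam hlam4
  have hlampos : (0:ℝ) < lam := lt_of_lt_of_le one_pos h1lam
  set h : EuclideanSpace ℝ (Fin n) := lam⁻¹ • e with hh
  have ht : ‖h‖ = ‖e‖ / lam := by
    rw [hh, norm_smul, norm_inv, Real.norm_eq_abs, abs_of_pos hlampos, div_eq_inv_mul]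
  set t : ℝ := ‖h‖ with htd
  have htpos : 0 < t := by rw [ht]; positivity
  have ht4 : t ≤ 1/4 := by
    rw [ht, div_le_div_iff₀ hlampos (by norm_num)]
    linarith
  -- v and its properties
  set v : EuclideanSpace ℝ (Fin n) → ℝ := fun x => u lam x - Q x with hv
  have hvdiff : ∀ x ∈ Metric.ball (0:EuclideanSpace ℝ (Fin n)) 2, DifferentiableAt ℝ v x :=
    fun x hx => (hdiff lam h1lam x hx).sub (hQdiff x)
  have hvgrad : ∀ x ∈ Metric.ball (0:EuclideanSpace ℝ (Fin n)) 2, ‖fderiv ℝ v x‖ ≤ ε' := by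
    intro x hx
    have : fderiv ℝ v x = fderiv ℝ (u lam) x - fderiv ℝ Q x :=
      fderiv_sub (hdiff lam h1lam x hx) (hQdiff x)
    rw [this, ← dist_eq_norm']
    exact (hgrad x hx).le
  have hlip : ∀ x ∈ Metric.ball (0:EuclideanSpace ℝ (Fin n)) 2,
      ∀ y ∈ Metric.ball (0:EuclideanSpace ℝ (Fin n)) 2, ‖v y - v x‖ ≤ ε' * ‖y - x‖ :=
    fun x hx y hy =>
      (convex_ball (0:EuclideanSpace ℝ (Fin n)) 2).norm_image_sub_le_of_norm_fderiv_le
        hvdiff hvgrad hx hy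
  have hvcont : ContinuousOn v (Metric.ball (0:EuclideanSpace ℝ (Fin n)) 2) :=
    fun x hx => (hvdiff x hx).continuousAt.continuousWithinAt
  -- integrability
  have hcbsub : Metric.closedBall (0:EuclideanSpace ℝ (Fin n)) (3/2)
      ⊆ Metric.ball (0:EuclideanSpace ℝ (Fin n)) 2 :=
    Metric.closedBall_subset_ball (by norm_num)
  have hvint : IntegrableOn v (Metric.closedBall (0:EuclideanSpace ℝ (Fin n)) (3/2)) volume :=
    (hvcont.mono hcbsub).integrableOn_compact (isCompact_closedBall _ _)
  have hmem32 : ∀ g : EuclideanSpace ℝ (Fin n), ‖g‖ ≤ t →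
      Metric.ball g 1 ⊆ Metric.closedBall (0:EuclideanSpace ℝ (Fin n)) (3/2) := by
    intro g hg x hx
    rw [mem_ball, dist_eq_norm] at hx
    rw [Metric.mem_closedBall, dist_zero_right]
    calc ‖x‖ ≤ ‖x - g‖ + ‖g‖ := by simpa using norm_add_le (x - g) g
      _ ≤ 1 + t := by linarith
      _ ≤ 3/2 := by linarith
  have hb0 : Metric.ball (0:EuclideanSpace ℝ (Fin n)) 1
      ⊆ Metric.closedBall (0:EuclideanSpace ℝ (Fin n)) (3/2) :=
    hmem32 0 (by simpa using htpos.le)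
  have hbh : Metric.ball h 1 ⊆ Metric.closedBall (0:EuclideanSpace ℝ (Fin n)) (3/2) :=
    hmem32 h le_rfl
  have hbnh : Metric.ball (-h) 1 ⊆ Metric.closedBall (0:EuclideanSpace ℝ (Fin n)) (3/2) :=
    hmem32 (-h) (norm_neg h).le
  -- shifted translate of v
  set w : EuclideanSpace ℝ (Fin n) → ℝ := fun x => v (x + -h) with hw
  have hcbB2 : ∀ x ∈ Metric.closedBall (0:EuclideanSpace ℝ (Fin n)) (3/2),
      x + -h ∈ Metric.ball (0:EuclideanSpace ℝ (Fin n)) 2 := by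
    intro x hx
    rw [Metric.mem_closedBall, dist_zero_right] at hx
    rw [mem_ball, dist_zero_right]
    calc ‖x + -h‖ ≤ ‖x‖ + ‖h‖ := by simpa using norm_add_le x (-h)
      _ ≤ 3/2 + 1/4 := by rw [← htd]; linarith
      _ < 2 := by norm_num
  have hwint : IntegrableOn w (Metric.closedBall (0:EuclideanSpace ℝ (Fin n)) (3/2)) volume := by
    apply ContinuousOn.integrableOn_compact (isCompact_closedBall _ _)
    exact hvcont.comp ((continuous_id.add continuous_const).continuousOn) hcbB2
  -- integrability of shifted functions on ball 0 1
  have hshiftint : ∀ g : EuclideanSpace ℝ (Fin n), ‖g‖ ≤ t →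
      IntegrableOn (fun x => v (x + g)) (Metric.ball (0:EuclideanSpace ℝ (Fin n)) 1) volume := by
    intro g hg
    apply IntegrableOn.mono_set _ Metric.ball_subset_closedBall
    apply ContinuousOn.integrableOn_compact (isCompact_closedBall _ _)
    apply hvcont.comp ((continuous_id.add continuous_const).continuousOn)
    intro x hx
    rw [Metric.mem_closedBall, dist_zero_right] at hx
    rw [mem_ball, dist_zero_right]
    calc ‖x + g‖ ≤ ‖x‖ + ‖g‖ := norm_add_le x g
      _ ≤ 1 + t := by linarith
      _ < 2 := by linarith
  have hint1 : IntegrableOn (fun x => v (x + h)) (Metric.ball (0:EuclideanSpace ℝ (Fin n)) 1) volume :=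
    hshiftint h le_rfl
  have hint2 : IntegrableOn (fun x => v (x + -h)) (Metric.ball (0:EuclideanSpace ℝ (Fin n)) 1) volume :=
    hshiftint (-h) (norm_neg h).le
  have hint0 : IntegrableOn v (Metric.ball (0:EuclideanSpace ℝ (Fin n)) 1) volume :=
    hvint.mono_set hb0
  have ht2 : (t:ℝ)^2 ≠ 0 := by positivity
  -- pointwise identity
  have hptwise : ∀ x : EuclideanSpace ℝ (Fin n),
      (u lam (x + h) + u lam (x - h) - 2 * u lam x) / t^2
        = c + (v (x + h) + v (x + -h) - 2 * v x) / t^2 := by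
    intro x
    have hAh : (∑ i, ∑ j, A i j * h i * h j) = c * t^2 := by
      have hterm : ∀ i j, A i j * h i * h j = lam⁻¹ * lam⁻¹ * (A i j * e i * e j) := by
        intro i j
        simp only [hh, PiLp.smul_apply, smul_eq_mul]
        ring
      calc (∑ i, ∑ j, A i j * h i * h j)
          = lam⁻¹ * lam⁻¹ * ∑ i, ∑ j, A i j * e i * e j := by
            simp_rw [hterm, ← Finset.mul_sum]
        _ = c * t^2 := by
            rw [hc, ht]
            have hl : lam ≠ 0 := ne_of_gt hlampos
            have hne : ‖e‖ ≠ 0 := ne_of_gt hepos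
            rw [div_pow, div_mul_div_comm, mul_comm (‖e‖^2) (lam^2), ← div_mul_div_comm,
              div_self (pow_ne_zero 2 hne), mul_one, pow_two, ← div_div,
              div_eq_inv_mul, div_eq_inv_mul]
            ring
    have hnum : u lam (x + h) + u lam (x - h) - 2 * u lam x
        = (v (x + h) + v (x + -h) - 2 * v x) + (Q (x + h) + Q (x - h) - 2 * Q x) := by
      simp only [hv, sub_eq_add_neg]
      ring
    rw [hnum, hQsec, hAh]
    field_simp
    ring
  -- split the integral
  have hWint : IntegrableOn (fun x => (v (x + h) + v (x + -h) - 2 * v x) / t^2)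
      (Metric.ball (0:EuclideanSpace ℝ (Fin n)) 1) volume :=
    (((hint1.add hint2).sub (hint0.const_mul 2)).div_const _)
  have hsplit : (∫ x in Metric.ball (0:EuclideanSpace ℝ (Fin n)) 1,
        (u lam (x + h) + u lam (x - h) - 2 * u lam x) / t^2)
      = c * μB + (∫ x in Metric.ball (0:EuclideanSpace ℝ (Fin n)) 1,
        (v (x + h) + v (x + -h) - 2 * v x) / t^2) := by
    rw [setIntegral_congr_fun measurableSet_ball (fun x _ => hptwise x)]
    rw [integral_add ((integrableOn_const_iff (C := c)).mpr (Or.inr measure_ball_lt_top)) hWint]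
    rw [setIntegral_const, smul_eq_mul, mul_comm, hμB, measureReal_def]
  -- compute the remainder integral
  have hWeq : (∫ x in Metric.ball (0:EuclideanSpace ℝ (Fin n)) 1,
        (v (x + h) + v (x + -h) - 2 * v x) / t^2)
      = ((∫ x in Metric.ball h 1, v x) + (∫ x in Metric.ball (-h) 1, v x)
          - 2 * (∫ x in Metric.ball (0:EuclideanSpace ℝ (Fin n)) 1, v x)) / t^2 := by
    have hint12 : IntegrableOn (fun x => v (x + h) + v (x + -h))
        (Metric.ball (0:EuclideanSpace ℝ (Fin n)) 1) volume := hint1.add hint2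
    have hint02 : IntegrableOn (fun x => 2 * v x)
        (Metric.ball (0:EuclideanSpace ℝ (Fin n)) 1) volume := hint0.const_mul 2
    rw [integral_div]
    congr 1
    rw [integral_sub hint12 hint02, integral_add hint1 hint2, integral_const_mul]
    rw [shift_int v 0 h 1, shift_int v 0 (-h) 1, zero_add, zero_add]
  -- the difference decomposition
  have hdiffInt : ∀ f : EuclideanSpace ℝ (Fin n) → ℝ,
      IntegrableOn f (Metric.closedBall (0:EuclideanSpace ℝ (Fin n)) (3/2)) volume →
      (∫ x in Metric.ball h 1, f x) - (∫ x in Metric.ball (0:EuclideanSpace ℝ (Fin n)) 1, f x)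
        = (∫ x in Metric.ball h 1 \ Metric.ball (0:EuclideanSpace ℝ (Fin n)) 1, f x)
          - (∫ x in Metric.ball (0:EuclideanSpace ℝ (Fin n)) 1 \ Metric.ball h 1, f x) := by
    intro f hf
    have e1 := integral_inter_add_diff (μ := volume) (f := f)
      (s := Metric.ball h 1) (t := Metric.ball (0:EuclideanSpace ℝ (Fin n)) 1)
      measurableSet_ball (hf.mono_set hbh)
    have e2 := integral_inter_add_diff (μ := volume) (f := f)
      (s := Metric.ball (0:EuclideanSpace ℝ (Fin n)) 1) (t := Metric.ball h 1)
      measurableSet_ball (hf.mono_set hb0)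
    rw [Set.inter_comm] at e2
    linarith
  -- translation identities
  have htrans1 : (∫ x in Metric.ball (0:EuclideanSpace ℝ (Fin n)) 1, v x)
      = ∫ x in Metric.ball h 1, w x := by
    rw [hw, shift_int v h (-h) 1, add_neg_cancel]
  have htrans2 : (∫ x in Metric.ball (-h) 1, v x)
      = ∫ x in Metric.ball (0:EuclideanSpace ℝ (Fin n)) 1, w x := by
    rw [hw, shift_int v 0 (-h) 1, zero_add]
  have hD : (∫ x in Metric.ball h 1, v x) + (∫ x in Metric.ball (-h) 1, v x)
        - 2 * (∫ x in Metric.ball (0:EuclideanSpace ℝ (Fin n)) 1, v x)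
      = (∫ x in Metric.ball h 1 \ Metric.ball (0:EuclideanSpace ℝ (Fin n)) 1, (v x - w x))
        - (∫ x in Metric.ball (0:EuclideanSpace ℝ (Fin n)) 1 \ Metric.ball h 1, (v x - w x)) := by
    have d1 := hdiffInt v hvint
    have d2 := hdiffInt w hwint
    have i1 : IntegrableOn v (Metric.ball h 1 \ Metric.ball (0:EuclideanSpace ℝ (Fin n)) 1) volume :=
      hvint.mono_set ((Set.diff_subset).trans hbh)
    have i2 : IntegrableOn w (Metric.ball h 1 \ Metric.ball (0:EuclideanSpace ℝ (Fin n)) 1) volume :=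
      hwint.mono_set ((Set.diff_subset).trans hbh)
    have i3 : IntegrableOn v (Metric.ball (0:EuclideanSpace ℝ (Fin n)) 1 \ Metric.ball h 1) volume :=
      hvint.mono_set ((Set.diff_subset).trans hb0)
    have i4 : IntegrableOn w (Metric.ball (0:EuclideanSpace ℝ (Fin n)) 1 \ Metric.ball h 1) volume :=
      hwint.mono_set ((Set.diff_subset).trans hb0)
    rw [integral_sub i1 i2, integral_sub i3 i4]
    rw [htrans1, htrans2]
    linarith
  -- annulus containments
  have hsub1 : Metric.ball h 1 \ Metric.ball (0:EuclideanSpace ℝ (Fin n)) 1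
      ⊆ Metric.ball (0:EuclideanSpace ℝ (Fin n)) (1+t) \ Metric.ball (0:EuclideanSpace ℝ (Fin n)) (1-t) := by
    rintro x ⟨hx1, hx2⟩
    rw [mem_ball, dist_eq_norm] at hx1
    rw [mem_ball, dist_zero_right, not_lt] at hx2
    constructor
    · rw [mem_ball, dist_zero_right]
      calc ‖x‖ ≤ ‖x - h‖ + ‖h‖ := by simpa using norm_add_le (x - h) h
        _ < 1 + t := by rw [← htd]; linarith
    · rw [mem_ball, dist_zero_right, not_lt]
      linarith
  have hsub2 : Metric.ball (0:EuclideanSpace ℝ (Fin n)) 1 \ Metric.ball h 1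
      ⊆ Metric.ball (0:EuclideanSpace ℝ (Fin n)) (1+t) \ Metric.ball (0:EuclideanSpace ℝ (Fin n)) (1-t) := by
    rintro x ⟨hx1, hx2⟩
    rw [mem_ball, dist_zero_right] at hx1
    rw [mem_ball, dist_eq_norm, not_lt] at hx2
    constructor
    · rw [mem_ball, dist_zero_right]; linarith
    · rw [mem_ball, dist_zero_right, not_lt]
      have : ‖x - h‖ ≤ ‖x‖ + ‖h‖ := by simpa [sub_eq_add_neg] using norm_add_le x (-h)
      rw [← htd] at this
      linarith
  -- bound on each piece
  have hpiece : ∀ S : Set (EuclideanSpace ℝ (Fin n)),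
      S ⊆ Metric.ball (0:EuclideanSpace ℝ (Fin n)) (1+t) \ Metric.ball (0:EuclideanSpace ℝ (Fin n)) (1-t) →
      |∫ x in S, (v x - w x)| ≤ (ε' * t) * ((n * 2^n * t) * μB) := by
    intro S hS
    have hSfin : volume S < ⊤ :=
      lt_of_le_of_lt (measure_mono (hS.trans Set.diff_subset)) measure_ball_lt_top
    have hptbd : ∀ x ∈ S, ‖v x - w x‖ ≤ ε' * t := by
      intro x hx
      have hx1 := (hS hx).1
      rw [mem_ball, dist_zero_right] at hx1
      have hxB2 : x ∈ Metric.ball (0:EuclideanSpace ℝ (Fin n)) 2 := by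
        rw [mem_ball, dist_zero_right]; linarith
      have hxhB2 : x + -h ∈ Metric.ball (0:EuclideanSpace ℝ (Fin n)) 2 := by
        rw [mem_ball, dist_zero_right]
        calc ‖x + -h‖ ≤ ‖x‖ + ‖h‖ := by simpa using norm_add_le x (-h)
          _ < (1 + t) + t := by rw [← htd]; linarith
          _ < 2 := by linarith
      have := hlip (x + -h) hxhB2 x hxB2
      have hxx : x - (x + -h) = h := by abel
      rw [hxx, ← htd] at this
      simpa [hw] using this
    have hSsub : S ⊆ Metric.closedBall (0:EuclideanSpace ℝ (Fin n)) (3/2) := by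
      intro x hx
      have hx1 := (hS hx).1
      rw [mem_ball, dist_zero_right] at hx1
      rw [Metric.mem_closedBall, dist_zero_right]
      linarith
    have hSint : IntegrableOn (fun x => v x - w x) S volume :=
      (hvint.mono_set hSsub).sub (hwint.mono_set hSsub)
    calc |∫ x in S, (v x - w x)| ≤ (ε' * t) * (volume S).toReal := by
          simpa [Real.norm_eq_abs, measureReal_def] using
            norm_setIntegral_le_of_norm_le_const (μ := volume) hSfin hptbd
      _ ≤ (ε' * t) * ((n * 2^n * t) * μB) := by
          apply mul_le_mul_of_nonneg_left _ (by positivity)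
          calc (volume S).toReal
              ≤ (volume (Metric.ball (0:EuclideanSpace ℝ (Fin n)) (1+t)
                  \ Metric.ball (0:EuclideanSpace ℝ (Fin n)) (1-t))).toReal := by
                apply ENNReal.toReal_mono
                · exact (lt_of_le_of_lt (measure_mono Set.diff_subset) measure_ball_lt_top).ne
                · exact measure_mono hS
            _ ≤ (n * 2^n * t) * μB := ann_bound n t htpos ht4
  -- put everything together
  rw [hsplit, hWeq, hD, Real.dist_eq]
  have b1 := hpiece _ hsub1
  have b2 := hpiece _ hsub2
  have habs : |((∫ x in Metric.ball h 1 \ Metric.ball (0:EuclideanSpace ℝ (Fin n)) 1, (v x - w x))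
      - (∫ x in Metric.ball (0:EuclideanSpace ℝ (Fin n)) 1 \ Metric.ball h 1, (v x - w x))) / t^2|
      ≤ K * ε' := by
    rw [abs_div, abs_of_pos (by positivity : (0:ℝ) < t^2)]
    rw [div_le_iff₀ (by positivity)]
    calc |(∫ x in Metric.ball h 1 \ Metric.ball (0:EuclideanSpace ℝ (Fin n)) 1, (v x - w x))
        - (∫ x in Metric.ball (0:EuclideanSpace ℝ (Fin n)) 1 \ Metric.ball h 1, (v x - w x))|
        ≤ (ε' * t) * ((n * 2^n * t) * μB) + (ε' * t) * ((n * 2^n * t) * μB) :=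
          (abs_sub _ _).trans (add_le_add b1 b2)
      _ = K * ε' * t^2 := by rw [hK]; ring
  have hfinal : |c * μB + ((∫ x in Metric.ball h 1 \ Metric.ball (0:EuclideanSpace ℝ (Fin n)) 1, (v x - w x))
      - (∫ x in Metric.ball (0:EuclideanSpace ℝ (Fin n)) 1 \ Metric.ball h 1, (v x - w x))) / t^2
      - c * μB| ≤ K * ε' := by
    simpa [add_sub_cancel_left] using habs
  calc _ ≤ K * ε' := hfinal
    _ < ε := by
        have hKε : K * ε' = K * ε / (K + 1) := by rw [hε']; ring
        rw [hKε, div_lt_iff₀ (by positivity : (0:ℝ) < K + 1)]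
        nlinarith
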